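/- Assume m_{-2} := ∫_{[0,1]} x^{-2} Λ(dx) < ∞. Fix ℓ ∈ ℕ and let φ: [1,∞) → (0,∞) be a nondecreasing function, slowly varying at ∞, such that ∫_{(0,1]} y^{-2} φ(1/y) Λ(dy) < ∞. Then the series Σ_{m=ℓ+1}^{∞} p_{m,ℓ} φ(m)/m converges. -/

import Mathlib

open MeasureTheory Filter Topology BoundedContinuousFunction
open scoped ENNReal NNReal

noncomputable section

/-- Collision rate `λ_{m,k} = ∫_{[0,1]} x^{k-2} (1-x)^{m-k} Λ(dx)`. -/
def lamColl (Λ : Measure ℝ) (m k : ℕ) : ℝ :=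
  ∫ x in Set.Icc (0:ℝ) 1, x ^ (k - 2) * (1 - x) ^ (m - k) ∂Λ

/-- Total collision rate `λ_m = Σ_{k=2}^m C(m,k) λ_{m,k}`. -/
def lamTot (Λ : Measure ℝ) (m : ℕ) : ℝ :=
  ∑ k ∈ Finset.Icc 2 m, (m.choose k : ℝ) * lamColl Λ m k

/-- `p_{m,k} = C(m,k+1) λ_{m,k+1} / λ_m`. -/
def pColl (Λ : Measure ℝ) (m k : ℕ) : ℝ :=
  (m.choose (k + 1) : ℝ) * lamColl Λ m (k + 1) / lamTot Λ m

/-- Adding to a spectrum the record of one collision of `j+1` blocks. -/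
def addColl (j : ℕ) (x : ℕ → ℝ) : ℕ → ℝ := fun k => (if k = j + 1 then 1 else 0) + x k

/-- `μ n` is the law of the collision spectrum `(X_{n,k})_{k ≥ 2}` of the `Λ`-coalescent
started from `n` blocks, viewed as a (probability) measure on `ℕ → ℝ` whose coordinate `k`
carries `X_{n,k}`; it is characterised by the distributional recursion obtained by
decomposing at the first collision. -/
def IsCollisionSpectrum (Λ : Measure ℝ) (μ : ℕ → Measure (ℕ → ℝ)) : Prop :=
  (∀ n, IsProbabilityMeasure (μ n)) ∧
  μ 1 = Measure.dirac (fun _ => (0:ℝ)) ∧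
  ∀ n, 2 ≤ n → μ n = ∑ j ∈ Finset.Icc 1 (n - 1),
      ENNReal.ofReal (pColl Λ n j) • (μ (n - j)).map (addColl j)

/-- `m_{-2} = ∫_{[0,1]} x^{-2} Λ(dx)`. -/
def mm2 (Λ : Measure ℝ) : ℝ≥0∞ :=
  ∫⁻ x in Set.Icc (0:ℝ) 1, ENNReal.ofReal (x⁻¹ ^ 2) ∂Λ

/-- The law of `1 - W`, i.e. the probability measure `m_{-2}^{-1} y^{-2} Λ(dy)` on `[0,1]`. -/
def lawY (Λ : Measure ℝ) : Measure ℝ :=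
  (mm2 Λ)⁻¹ • (Λ.restrict (Set.Icc 0 1)).withDensity fun y => ENNReal.ofReal (y⁻¹ ^ 2)

/-- The law of `W`: the pushforward of `lawY Λ` under `y ↦ 1 - y`, so that
`P{W ≤ x} = m_{-2}^{-1} ∫_{[1-x,1]} y^{-2} Λ(dy)`. -/
def lawW (Λ : Measure ℝ) : Measure ℝ := (lawY Λ).map fun y => 1 - y

section Aux
open Finset
namespace CollAux

-- partial sums of the negative-binomial series
lemma core_sum_le (k N : ℕ) {y : ℝ} (h0 : 0 ≤ y) (h1 : y < 1) :
    ∑ n ∈ range N, ((n + k).choose k : ℝ) * y ^ n ≤ 1 / (1 - y) ^ (k + 1) := by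
  have h := hasSum_choose_mul_geometric_of_norm_lt_one (𝕜 := ℝ) k
    (r := y) (by rw [Real.norm_eq_abs, abs_of_nonneg h0]; exact h1)
  have := Summable.sum_le_tsum (range N)
    (fun n _ => by positivity) h.summable
  calc ∑ n ∈ range N, ((n + k).choose k : ℝ) * y ^ n ≤ _ := this
    _ = 1 / (1 - y) ^ (k + 1) := h.tsum_eq

lemma sum_b_le (k M : ℕ) {x : ℝ} (hx : 0 < x) (hx1 : x ≤ 1) :
    ∑ m ∈ Finset.Ioo k M, (m.choose (k+1) : ℝ) * (x ^ (k+1) * (1-x) ^ (m - (k+1))) ≤ 1 / x := by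
  have hy0 : (0:ℝ) ≤ 1 - x := by linarith
  have hy1 : 1 - x < 1 := by linarith
  rw [← Finset.Ico_add_one_left_eq_Ioo, Finset.sum_Ico_eq_sum_range]
  have : ∀ n : ℕ, ((k+1+n).choose (k+1) : ℝ) * (x ^ (k+1) * (1-x) ^ (k+1+n - (k+1)))
      = x^(k+1) * (((n + (k+1)).choose (k+1) : ℝ) * (1-x)^n) := by
    intro n
    rw [Nat.add_sub_cancel_left, Nat.add_comm (k+1) n]
    ring
  rw [Finset.sum_congr rfl fun n _ => this n, ← Finset.mul_sum]
  have hcore := core_sum_le (k+1) (M - (k+1)) hy0 hy1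
  have h1x : (1 - (1-x)) = x := by ring
  rw [h1x] at hcore
  calc x ^ (k+1) * ∑ n ∈ range (M - (k+1)), ((n + (k+1)).choose (k+1) : ℝ) * (1-x)^n
      ≤ x ^ (k+1) * (1 / x ^ (k + 1 + 1)) := by
        apply mul_le_mul_of_nonneg_left hcore (by positivity)
    _ = 1 / x := by field_simp; ring

lemma sum_b_div_le (k M : ℕ) {x : ℝ} (hx : 0 < x) (hx1 : x ≤ 1) :
    ∑ m ∈ Finset.Ioo k M, (m.choose (k+1) : ℝ) * (x ^ (k+1) * (1-x) ^ (m - (k+1))) / m ≤ 1 := by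
  have hy0 : (0:ℝ) ≤ 1 - x := by linarith
  have hy1 : 1 - x < 1 := by linarith
  rw [← Finset.Ico_add_one_left_eq_Ioo, Finset.sum_Ico_eq_sum_range]
  have key : ∀ n : ℕ, ((k+1+n).choose (k+1) : ℝ) * (x ^ (k+1) * (1-x) ^ (k+1+n - (k+1))) / (k+1+n)
      = (x^(k+1) / (k+1)) * (((n + k).choose k : ℝ) * (1-x)^n) := by
    intro n
    have h2 : (k+1+n).choose (k+1) * (k+1) = (k+1+n) * ((n+k).choose k) := by
      have hid : (k + n + 1) * (k+n).choose k = (k+n+1).choose (k+1) * (k+1) :=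
        Nat.add_one_mul_choose_eq (k+n) k
      rw [show k+1+n = k+n+1 by omega, show n+k = k+n by omega]
      omega
    have hidR : ((k+1+n).choose (k+1) : ℝ) * (k+1) = (k+1+n) * ((n+k).choose k : ℝ) := by
      exact_mod_cast h2
    have hkn : ((k:ℝ)+1+(n:ℝ)) ≠ 0 := by positivity
    rw [Nat.add_sub_cancel_left]
    push_cast
    have hk1 : ((k:ℝ)+1) ≠ 0 := by positivity
    field_simp
    linear_combination ((1-x)^n) * hidR
  push_cast
  rw [Finset.sum_congr rfl fun n _ => key n, ← Finset.mul_sum]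
  have hcore := core_sum_le k (M - (k+1)) hy0 hy1
  rw [show (1 - (1-x)) = x by ring] at hcore
  calc x ^ (k+1) / (k+1) * ∑ n ∈ Finset.range (M - (k+1)), ((n + k).choose k : ℝ) * (1-x)^n
      ≤ x ^ (k+1) / (k+1) * (1 / x ^ (k + 1)) := by
        apply mul_le_mul_of_nonneg_left hcore (by positivity)
    _ = 1 / (k+1) := by field_simp
    _ ≤ 1 := by
        rw [div_le_one (by positivity)]
        linarith [Nat.cast_nonneg (α := ℝ) k]
open Filter Topology

section
variable {φ : ℝ → ℝ} (hφpos : ∀ x : ℝ, 1 ≤ x → 0 < φ x)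
    (hφmono : MonotoneOn φ (Set.Ici 1))

-- doubling from slow variation
include hφpos in
lemma exists_doubling (hφsv : ∀ c : ℝ, 0 < c → Tendsto (fun x => φ (c * x) / φ x) atTop (𝓝 1)) :
    ∃ T : ℝ, 2 ≤ T ∧ ∀ t : ℝ, T ≤ t → φ (2 * t) ≤ 2 * φ t := by
  have h := (hφsv 2 (by norm_num)).eventually (eventually_le_nhds (show (1:ℝ) < 2 by norm_num))
  rw [eventually_atTop] at h
  obtain ⟨T0, hT0⟩ := h
  refine ⟨max T0 2, le_max_right _ _, fun t ht => ?_⟩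
  have ht2 : (2:ℝ) ≤ t := le_trans (le_max_right _ _) ht
  have hφt : 0 < φ t := hφpos t (by linarith)
  have := hT0 t (le_trans (le_max_left _ _) ht)
  rw [div_le_iff₀ hφt] at this
  linarith

lemma doubling_chain {T : ℝ} (hT : 2 ≤ T) (hd : ∀ t : ℝ, T ≤ t → φ (2 * t) ≤ 2 * φ t)
    {b : ℝ} (hb : T ≤ b) : ∀ k : ℕ, φ (2 ^ k * b) ≤ 2 ^ k * φ b := by
  intro k
  induction k with
  | zero => simp
  | succ k ih =>
    have hbpos : (0:ℝ) < b := by linarith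
    have h2k : (1:ℝ) ≤ 2 ^ k := by exact_mod_cast Nat.one_le_two_pow
    have hTb : T ≤ 2 ^ k * b := le_trans hb (by nlinarith)
    calc φ (2 ^ (k+1) * b) = φ (2 * (2 ^ k * b)) := by ring_nf
      _ ≤ 2 * φ (2 ^ k * b) := hd _ hTb
      _ ≤ 2 * (2 ^ k * φ b) := by linarith [ih]
      _ = 2 ^ (k+1) * φ b := by ring

include hφpos hφmono in
lemma growth {T : ℝ} (hT : 2 ≤ T) (hd : ∀ t : ℝ, T ≤ t → φ (2 * t) ≤ 2 * φ t)
    {b s : ℝ} (hb : T ≤ b) (hs : b ≤ s) : φ s ≤ 2 * φ b * (s / b) := by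
  have hbpos : (0:ℝ) < b := by linarith
  have hb1 : (1:ℝ) ≤ b := by linarith
  have hφb : 0 < φ b := hφpos b hb1
  obtain ⟨k, hk⟩ := pow_unbounded_of_one_lt (s / b) (show (1:ℝ) < 2 by norm_num)
  have hk' : s ≤ 2 ^ k * b := by
    rw [div_lt_iff₀ hbpos] at hk; linarith
  clear hk
  induction k generalizing s with
  | zero =>
    simp only [pow_zero, one_mul] at hk'
    have : s = b := le_antisymm hk' hs
    subst this
    have : (1:ℝ) ≤ s / s := by rw [div_self hbpos.ne']
    nlinarith
  | succ k ih =>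
    have hps : (2:ℝ) ^ (k+1) = 2 ^ k * 2 := pow_succ 2 k
    by_cases hcase : s ≤ 2 ^ k * b
    · exact ih hs hcase
    · by_cases hcase2 : s ≤ 2 * b
      · have h1 : φ s ≤ φ (2 * b) := hφmono (by simp; linarith) (by simp; linarith) hcase2
        have h2 : φ (2 * b) ≤ 2 * φ b := hd b hb
        have hsb : (1:ℝ) ≤ s / b := (one_le_div hbpos).2 hs
        nlinarith
      · push_neg at hcase hcase2
        have hs2 : b ≤ s / 2 := by linarith
        have ih2 := ih hs2 (by nlinarith [hps, hbpos])
        have hdse : φ s ≤ 2 * φ (s / 2) := by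
          have := hd (s / 2) (by linarith)
          rw [show 2 * (s / 2) = s by ring] at this
          exact this
        have h3 : s / 2 / b = s / b / 2 := by ring
        rw [h3] at ih2
        nlinarith

include hφpos hφmono in
lemma phi_bound {T : ℝ} (hT : 2 ≤ T) (hd : ∀ t : ℝ, T ≤ t → φ (2 * t) ≤ 2 * φ t)
    {x s : ℝ} (hx : 0 < x) (hx1 : x ≤ 1) (hs : 1 ≤ s) :
    φ s ≤ 2 * (φ x⁻¹ + φ T) * (1 + s * x) := by
  have hxinv : (1:ℝ) ≤ x⁻¹ := (one_le_inv_iff₀).2 ⟨hx, hx1⟩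
  set b := max x⁻¹ T with hbdef
  have hbT : T ≤ b := le_max_right _ _
  have hb1 : (1:ℝ) ≤ b := le_trans (by linarith) hbT
  have hbpos : (0:ℝ) < b := by linarith
  have hφb : φ b ≤ φ x⁻¹ + φ T := by
    rcases max_cases x⁻¹ T with ⟨h1, _⟩ | ⟨h1, _⟩ <;> rw [hbdef, h1]
    · linarith [hφpos T (by linarith)]
    · linarith [hφpos x⁻¹ hxinv]
  have hφbpos : 0 < φ b := hφpos b hb1
  have hsum : 0 < φ x⁻¹ + φ T := lt_of_lt_of_le hφbpos hφb
  have hsx : 0 ≤ s * x := by positivity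
  by_cases hc : s ≤ b
  · have : φ s ≤ φ b := hφmono hs hb1 hc
    nlinarith
  · push_neg at hc
    have hg := growth hφpos hφmono hT hd hbT hc.le
    have hinvb : s / b ≤ s * x := by
      rw [div_le_iff₀ hbpos]
      have : x⁻¹ ≤ b := le_max_left _ _
      calc s = s * (x * x⁻¹) := by rw [mul_inv_cancel₀ hx.ne']; ring
        _ ≤ s * (x * b) := by nlinarith
        _ = s * x * b := by ring
    nlinarith
include hφpos hφmono in
lemma master {T : ℝ} (hT : 2 ≤ T) (hd : ∀ t : ℝ, T ≤ t → φ (2 * t) ≤ 2 * φ t)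
    (ℓ M : ℕ) (hℓ : 1 ≤ ℓ) {x : ℝ} (hx : 0 < x) (hx1 : x < 1) :
    ∑ m ∈ Finset.Ioo ℓ M, (m.choose (ℓ+1) : ℝ) * (x ^ (ℓ+1-2) * (1-x) ^ (m - (ℓ+1))) * (φ m / m)
      ≤ 4 * x⁻¹ ^ 2 * (φ x⁻¹ + φ T) := by
  set c := 2 * (φ x⁻¹ + φ T) with hc
  have hxinv : (1:ℝ) ≤ x⁻¹ := one_le_inv_iff₀.2 ⟨hx, hx1.le⟩
  have hsumpos : 0 < φ x⁻¹ + φ T := by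
    have := hφpos x⁻¹ hxinv; have := hφpos T (by linarith); linarith
  have hcpos : 0 < c := by rw [hc]; linarith
  have hy0 : (0:ℝ) ≤ 1 - x := by linarith
  have step1 : ∀ m ∈ Finset.Ioo ℓ M,
      (m.choose (ℓ+1) : ℝ) * (x ^ (ℓ+1-2) * (1-x) ^ (m - (ℓ+1))) * (φ m / m)
      ≤ c * x⁻¹ ^ 2 * ((m.choose (ℓ+1) : ℝ) * (x ^ (ℓ+1) * (1-x) ^ (m - (ℓ+1))) / m
          + x * ((m.choose (ℓ+1) : ℝ) * (x ^ (ℓ+1) * (1-x) ^ (m - (ℓ+1))))) := by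
    intro m hm
    rw [Finset.mem_Ioo] at hm
    have hm2 : 2 ≤ m := by omega
    have hmR : (1:ℝ) ≤ (m:ℝ) := by exact_mod_cast Nat.one_le_iff_ne_zero.2 (by omega)
    have hmpos : (0:ℝ) < m := by linarith
    have hphi : φ m ≤ c * (1 + m * x) := phi_bound hφpos hφmono hT hd hx hx1.le hmR
    have hA : (0:ℝ) ≤ (m.choose (ℓ+1) : ℝ) * (x ^ (ℓ+1-2) * (1-x) ^ (m - (ℓ+1))) := by positivity
    have h1 : (m.choose (ℓ+1) : ℝ) * (x ^ (ℓ+1-2) * (1-x) ^ (m - (ℓ+1))) * (φ m / m)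
        ≤ (m.choose (ℓ+1) : ℝ) * (x ^ (ℓ+1-2) * (1-x) ^ (m - (ℓ+1))) * (c * (1 + m * x) / m) := by
      apply mul_le_mul_of_nonneg_left _ hA
      gcongr
    refine h1.trans (le_of_eq ?_)
    have hxp : x ^ (ℓ+1) = x ^ (ℓ+1-2) * x ^ 2 := by
      rw [← pow_add]; congr 1; omega
    rw [hxp]
    field_simp
  refine (Finset.sum_le_sum step1).trans ?_
  rw [← Finset.mul_sum, Finset.sum_add_distrib, ← Finset.mul_sum]
  have hb1 := sum_b_div_le ℓ M hx hx1.le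
  have hb2 := sum_b_le ℓ M hx hx1.le
  have hxx : x * (1/x) = 1 := by field_simp
  have hinner : (∑ m ∈ Finset.Ioo ℓ M, (m.choose (ℓ+1) : ℝ) * (x ^ (ℓ+1) * (1-x) ^ (m - (ℓ+1))) / m)
      + x * (∑ m ∈ Finset.Ioo ℓ M, (m.choose (ℓ+1) : ℝ) * (x ^ (ℓ+1) * (1-x) ^ (m - (ℓ+1)))) ≤ 2 := by
    have h2 : x * (∑ m ∈ Finset.Ioo ℓ M, (m.choose (ℓ+1) : ℝ) * (x ^ (ℓ+1) * (1-x) ^ (m - (ℓ+1))))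
        ≤ x * (1/x) := mul_le_mul_of_nonneg_left hb2 hx.le
    rw [hxx] at h2
    linarith
  have hcx : 0 ≤ c * x⁻¹ ^ 2 := by positivity
  calc c * x⁻¹ ^ 2 * _ ≤ c * x⁻¹ ^ 2 * 2 := mul_le_mul_of_nonneg_left hinner hcx
    _ = 4 * x⁻¹ ^ 2 * (φ x⁻¹ + φ T) := by rw [hc]; ring

end

end CollAux
end Aux

namespace CollAux
lemma binom_tail_ge (n : ℕ) {x : ℝ} (h0 : 0 ≤ x) (h1 : x ≤ 1) :
    x^2 ≤ 1 - (1-x)^(n+2) - ((n:ℝ)+2)*x*(1-x)^(n+1) := by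
  induction n with
  | zero =>
    have h : 1 - (1-x)^2 - ((0:ℝ)+2)*x*(1-x)^(0+1) = x^2 := by push_cast; ring
    push_cast
    linarith
  | succ n ih =>
    have key : (1 - (1-x)^(n+1+2) - ((n:ℝ)+1+2)*x*(1-x)^(n+1+1))
        - (1 - (1-x)^(n+2) - ((n:ℝ)+2)*x*(1-x)^(n+1)) = ((n:ℝ)+2) * x^2 * (1-x)^(n+1) := by
      ring
    have hp : (0:ℝ) ≤ (1-x)^(n+1) := pow_nonneg (by linarith) _
    have hn : (0:ℝ) ≤ (n:ℝ)+2 := by positivity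
    push_cast
    linarith [mul_nonneg (mul_nonneg hn (sq_nonneg x)) hp]

lemma S_ge_one (m : ℕ) (hm : 2 ≤ m) {x : ℝ} (h0 : 0 ≤ x) (h1 : x ≤ 1) :
    1 ≤ ∑ k ∈ Finset.Icc 2 m, (m.choose k : ℝ) * (x^(k-2) * (1-x)^(m-k)) := by
  rcases eq_or_lt_of_le h0 with hx0 | hx0
  · -- x = 0
    have h2m : 2 ∈ Finset.Icc 2 m := by simp [Finset.mem_Icc]; omega
    have hsingle := Finset.single_le_sum
      (f := fun k => (m.choose k : ℝ) * (x^(k-2) * (1-x)^(m-k)))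
      (fun k _ => mul_nonneg (Nat.cast_nonneg _)
        (mul_nonneg (pow_nonneg h0 _) (pow_nonneg (by linarith) _))) h2m
    have hc2 : (1:ℝ) ≤ (m.choose 2 : ℝ) := by
      exact_mod_cast Nat.succ_le_of_lt (Nat.choose_pos hm)
    rw [← hx0]
    rw [← hx0] at hsingle
    refine hc2.trans (le_trans (le_of_eq ?_) hsingle)
    simp
  · -- 0 < x
    have hfull : ∑ k ∈ Finset.range (m+1), x^k * (1-x)^(m-k) * (m.choose k : ℝ) = 1 := by
      rw [← add_pow]
      simp
    have hsplit : ∑ k ∈ Finset.Ico 0 2, x^k * (1-x)^(m-k) * (m.choose k : ℝ)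
        + ∑ k ∈ Finset.Ico 2 (m+1), x^k * (1-x)^(m-k) * (m.choose k : ℝ)
        = ∑ k ∈ Finset.range (m+1), x^k * (1-x)^(m-k) * (m.choose k : ℝ) := by
      rw [Finset.range_eq_Ico]
      exact Finset.sum_Ico_consecutive _ (by omega) (by omega)
    have hlow : ∑ k ∈ Finset.Ico 0 2, x^k * (1-x)^(m-k) * (m.choose k : ℝ)
        = (1-x)^m + (m:ℝ) * x * (1-x)^(m-1) := by
      rw [show (2:ℕ) = 0+1+1 by rfl]
      rw [Finset.sum_Ico_succ_top (by omega), Finset.sum_Ico_succ_top (by omega)]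
      simp
      ring
    obtain ⟨n, rfl⟩ : ∃ n, m = n + 2 := ⟨m - 2, by omega⟩
    have hb := binom_tail_ge n h0 h1
    have e1 : n + 2 - 1 = n + 1 := by omega
    rw [e1] at hlow
    have hx2 : x^2 ≤ ∑ k ∈ Finset.Ico 2 (n+2+1), x^k * (1-x)^(n+2-k) * ((n+2).choose k : ℝ) := by
      have := hsplit.trans hfull
      rw [hlow] at this
      push_cast at this ⊢
      nlinarith [hb]
    have hIcc : Finset.Icc 2 (n+2) = Finset.Ico 2 (n+2+1) := by
      rw [Finset.Ico_add_one_right_eq_Icc]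
    rw [hIcc]
    have hterm : ∀ k ∈ Finset.Ico 2 (n+2+1),
        x^k * (1-x)^(n+2-k) * (((n+2).choose k : ℕ) : ℝ)
        = x^2 * ((((n+2).choose k : ℕ) : ℝ) * (x^(k-2) * (1-x)^(n+2-k))) := by
      intro k hk
      rw [Finset.mem_Ico] at hk
      have : x^k = x^2 * x^(k-2) := by rw [← pow_add]; congr 1; omega
      rw [this]; ring
    rw [Finset.sum_congr rfl hterm, ← Finset.mul_sum] at hx2
    have hx2pos : (0:ℝ) < x^2 := by positivity
    nlinarith [hx2]
end CollAux


/-- **(From the proof of Lemma 2.4)**: assume `m_{-2} < ∞`. Let `ℓ ∈ ℕ` and let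
`φ : [1,∞) → (0,∞)` be nondecreasing, slowly varying at `∞`, with
`∫_{(0,1]} y^{-2} φ(1/y) Λ(dy) < ∞`. Then `Σ_{m=ℓ+1}^∞ p_{m,ℓ} φ(m)/m` converges. -/
theorem series_p_phi_summable
    (Λ : Measure ℝ) [IsFiniteMeasure Λ] (hΛne : Λ ≠ 0)
    (hΛsupp : Λ (Set.Icc (0:ℝ) 1)ᶜ = 0) (hΛ0 : Λ {0} = 0) (hΛ1 : Λ {1} = 0)
    (hm2 : mm2 Λ < ∞)
    (ℓ : ℕ) (hℓ : 1 ≤ ℓ)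
    (φ : ℝ → ℝ)
    (hφpos : ∀ x : ℝ, 1 ≤ x → 0 < φ x)
    (hφmono : MonotoneOn φ (Set.Ici 1))
    (hφsv : ∀ c : ℝ, 0 < c → Tendsto (fun x => φ (c * x) / φ x) atTop (𝓝 1))
    (hφint : (∫⁻ y in Set.Ioc (0:ℝ) 1, ENNReal.ofReal (y⁻¹ ^ 2 * φ y⁻¹) ∂Λ) < ∞) :
    Summable (fun m : ℕ => if ℓ < m then pColl Λ m ℓ * φ m / m else 0) := by
  classical
  obtain ⟨T, hT2, hd⟩ := CollAux.exists_doubling hφpos hφsv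
  set I : Set ℝ := Set.Icc 0 1 with hI
  have hIm : MeasurableSet I := measurableSet_Icc
  have hΛI : Λ I = Λ Set.univ := by
    have h := measure_add_measure_compl (μ := Λ) hIm
    rw [hΛsupp, add_zero] at h; exact h
  have hc0pos : 0 < (Λ I).toReal := by
    refine ENNReal.toReal_pos ?_ (measure_ne_top _ _)
    rw [hΛI]
    simpa [Measure.measure_univ_eq_zero] using hΛne
  set c0 : ℝ := (Λ I).toReal with hc0
  -- integrability of continuous functions on I
  have hint : ∀ F : ℝ → ℝ, Continuous F → IntegrableOn F I Λ := fun F hF =>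
    hF.continuousOn.integrableOn_compact isCompact_Icc
  -- lower bound for lamTot
  have hlam : ∀ m : ℕ, 2 ≤ m → c0 ≤ lamTot Λ m := by
    intro m hm
    have hrw : lamTot Λ m = ∫ x in I, (∑ k ∈ Finset.Icc 2 m,
        (m.choose k : ℝ) * (x ^ (k-2) * (1-x) ^ (m-k))) ∂Λ := by
      rw [integral_finset_sum]
      · unfold lamTot lamColl
        exact Finset.sum_congr rfl fun k _ => (integral_const_mul _ _).symm
      · intro k _
        exact hint _ (by fun_prop)
    rw [hrw]
    have h1 : ∫ x in I, (1:ℝ) ∂Λ = c0 := by simp; rfl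
    rw [← h1]
    apply setIntegral_mono_on (hint _ continuous_const) ?_ hIm
    · intro x hx
      exact CollAux.S_ge_one m hm hx.1 hx.2
    · apply integrable_finset_sum
      intro k _
      exact hint _ (by fun_prop)
  -- measurable monotone clamp of φ
  set φ' : ℝ → ℝ := fun t => φ (max t 1) with hφ'def
  have hφ'mono : Monotone φ' := fun a b hab =>
    hφmono (Set.mem_Ici.2 (le_max_right _ _)) (Set.mem_Ici.2 (le_max_right _ _))
      (max_le_max hab le_rfl)
  have hφ'meas : Measurable φ' := hφ'mono.measurable
  -- the dominating function
  set h : ℝ → ℝ≥0∞ := fun x =>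
    ENNReal.ofReal (x⁻¹ ^ 2) * (ENNReal.ofReal (φ' x⁻¹) + ENNReal.ofReal (φ T)) with hhdef
  set B : ℝ≥0∞ := ∫⁻ x in I, h x ∂Λ with hBdef
  have hrestr : Λ.restrict I = Λ.restrict (Set.Ioc 0 1) := by
    apply Measure.restrict_congr_set
    rw [MeasureTheory.ae_eq_set]
    constructor
    · refine measure_mono_null (fun x hx => ?_) hΛ0
      simp only [Set.mem_diff, Set.mem_Icc, Set.mem_Ioc, not_and, not_le] at hx ⊢
      obtain ⟨⟨h1, h2⟩, h3⟩ := hx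
      by_contra hne
      exact absurd (h3 (lt_of_le_of_ne h1 (Ne.symm hne))) (not_lt.2 h2)
    · refine measure_mono_null (fun x hx => ?_) hΛ0
      exact absurd ⟨hx.1.1.le, hx.1.2⟩ hx.2
  have hB : B ≠ ⊤ := by
    have hpt : ∀ x ∈ Set.Ioc (0:ℝ) 1, h x =
        ENNReal.ofReal (x⁻¹ ^ 2 * φ x⁻¹) + ENNReal.ofReal (φ T) * ENNReal.ofReal (x⁻¹ ^ 2) := by
      intro x hx
      have hx1 : (1:ℝ) ≤ x⁻¹ := one_le_inv_iff₀.2 ⟨hx.1, hx.2⟩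
      have hmax : max x⁻¹ 1 = x⁻¹ := max_eq_left hx1
      rw [hhdef]
      simp only [hφ'def, hmax]
      rw [ENNReal.ofReal_mul (by positivity), mul_add]
      ring
    have hsplit : B = (∫⁻ x in Set.Ioc (0:ℝ) 1, ENNReal.ofReal (x⁻¹ ^ 2 * φ x⁻¹) ∂Λ)
        + ENNReal.ofReal (φ T) * ∫⁻ x in Set.Ioc (0:ℝ) 1, ENNReal.ofReal (x⁻¹ ^ 2) ∂Λ := by
      show (∫⁻ x in I, h x ∂Λ) = _
      rw [hrestr]
      rw [setLIntegral_congr_fun measurableSet_Ioc hpt]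
      rw [MeasureTheory.lintegral_add_right _
        (by fun_prop : Measurable fun x : ℝ => ENNReal.ofReal (φ T) * ENNReal.ofReal (x⁻¹ ^ 2))]
      rw [lintegral_const_mul' _ _ (by simp : ENNReal.ofReal (φ T) ≠ ⊤)]
    have hmm2' : (∫⁻ x in Set.Ioc (0:ℝ) 1, ENNReal.ofReal (x⁻¹ ^ 2) ∂Λ) < ⊤ := by
      have : (∫⁻ x in Set.Ioc (0:ℝ) 1, ENNReal.ofReal (x⁻¹ ^ 2) ∂Λ)
          = ∫⁻ x in I, ENNReal.ofReal (x⁻¹ ^ 2) ∂Λ := by rw [hrestr]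
      rw [this]
      exact hm2
    rw [hsplit]
    exact ENNReal.add_ne_top.2 ⟨hφint.ne, ENNReal.mul_ne_top (by simp) hmm2'.ne⟩
  -- nonnegativity of the numerators
  have hNum : ∀ m : ℕ, 0 ≤ (m.choose (ℓ+1) : ℝ) * lamColl Λ m (ℓ+1) := by
    intro m
    apply mul_nonneg (Nat.cast_nonneg _)
    apply setIntegral_nonneg hIm
    intro x hx
    exact mul_nonneg (pow_nonneg hx.1 _) (pow_nonneg (by linarith [hx.2]) _)
  have hnonneg : ∀ m : ℕ, 0 ≤ (if ℓ < m then pColl Λ m ℓ * φ m / m else 0) := by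
    intro m
    split
    · next hm =>
      have hm2 : 2 ≤ m := by omega
      have hmR : (1:ℝ) ≤ (m:ℝ) := by exact_mod_cast Nat.one_le_iff_ne_zero.2 (by omega)
      have hφm : 0 < φ m := hφpos _ hmR
      have hlm : 0 < lamTot Λ m := lt_of_lt_of_le hc0pos (hlam m hm2)
      unfold pColl
      exact div_nonneg (mul_nonneg (div_nonneg (hNum m) hlm.le) hφm.le)
        (by exact_mod_cast Nat.zero_le m)
    · exact le_rfl
  apply summable_of_sum_range_le (c := 4 * B.toReal / c0) hnonneg
  intro M
  have hfil : (Finset.range M).filter (fun m => ℓ < m) = Finset.Ioo ℓ M := by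
    ext a
    simp only [Finset.mem_filter, Finset.mem_range, Finset.mem_Ioo]
    tauto
  rw [← Finset.sum_filter, hfil]
  have hstep1 : ∀ m ∈ Finset.Ioo ℓ M, pColl Λ m ℓ * φ m / m
      ≤ ((m.choose (ℓ+1) : ℝ) * lamColl Λ m (ℓ+1)) * (φ m / m) / c0 := by
    intro m hm
    rw [Finset.mem_Ioo] at hm
    have hm2 : 2 ≤ m := by omega
    have hmR : (1:ℝ) ≤ (m:ℝ) := by exact_mod_cast Nat.one_le_iff_ne_zero.2 (by omega)
    have hφm : 0 < φ m := hφpos _ hmR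
    have hlm : c0 ≤ lamTot Λ m := hlam m hm2
    have h1 : pColl Λ m ℓ ≤ ((m.choose (ℓ+1) : ℝ) * lamColl Λ m (ℓ+1)) / c0 := by
      unfold pColl
      gcongr
      exact hNum m
    calc pColl Λ m ℓ * φ m / m = pColl Λ m ℓ * (φ m / m) := by ring
      _ ≤ (((m.choose (ℓ+1) : ℝ) * lamColl Λ m (ℓ+1)) / c0) * (φ m / m) := by
          apply mul_le_mul_of_nonneg_right h1
          positivity
      _ = ((m.choose (ℓ+1) : ℝ) * lamColl Λ m (ℓ+1)) * (φ m / m) / c0 := by ring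
  refine le_trans (Finset.sum_le_sum hstep1) ?_
  rw [← Finset.sum_div]
  have hterm : ∀ m ∈ Finset.Ioo ℓ M, ((m.choose (ℓ+1) : ℝ) * lamColl Λ m (ℓ+1)) * (φ m / m)
      = ∫ x in I, (m.choose (ℓ+1) : ℝ) * (x ^ (ℓ+1-2) * (1-x) ^ (m - (ℓ+1))) * (φ m / m) ∂Λ := by
    intro m _
    rw [MeasureTheory.integral_mul_const, integral_const_mul]
    rfl
  rw [Finset.sum_congr rfl hterm, ← MeasureTheory.integral_finset_sum _
    (fun m _ => hint _ (by fun_prop))]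
  -- bound the integral of the partial sums
  have hIineq : (∫ x in I, (∑ m ∈ Finset.Ioo ℓ M,
      (m.choose (ℓ+1) : ℝ) * (x ^ (ℓ+1-2) * (1-x) ^ (m - (ℓ+1))) * (φ m / m)) ∂Λ)
      ≤ 4 * B.toReal := by
    have hae2 : ∀ᵐ x ∂(Λ.restrict I), x ∈ Set.Ioo (0:ℝ) 1 := by
      rw [MeasureTheory.ae_iff]
      have hcompl : {a : ℝ | ¬ a ∈ Set.Ioo (0:ℝ) 1} = (Set.Ioo (0:ℝ) 1)ᶜ := rfl
      rw [hcompl, Measure.restrict_apply measurableSet_Ioo.compl]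
      refine measure_mono_null (fun x hx => ?_) (measure_union_null hΛ0 hΛ1)
      obtain ⟨hx1, hx2, hx3⟩ := hx
      rw [Set.mem_compl_iff, Set.mem_Ioo, not_and, not_lt] at hx1
      simp only [Set.mem_union, Set.mem_singleton_iff]
      rcases lt_or_eq_of_le hx2 with hpos | hzero
      · right; exact le_antisymm hx3 (hx1 hpos)
      · left; exact hzero.symm
    have haenn : (0:ℝ → ℝ) ≤ᵐ[Λ.restrict I] fun x => ∑ m ∈ Finset.Ioo ℓ M,
        (m.choose (ℓ+1) : ℝ) * (x ^ (ℓ+1-2) * (1-x) ^ (m - (ℓ+1))) * (φ m / m) := by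
      filter_upwards [hae2] with x hx
      apply Finset.sum_nonneg
      intro m hm
      rw [Finset.mem_Ioo] at hm
      have hmR : (1:ℝ) ≤ (m:ℝ) := by exact_mod_cast Nat.one_le_iff_ne_zero.2 (by omega)
      have hφm := hφpos (m:ℝ) hmR
      have hx0 : (0:ℝ) ≤ x := hx.1.le
      have hx1 : x ≤ 1 := hx.2.le
      have hq : 0 ≤ φ (m:ℝ) / (m:ℝ) := div_nonneg hφm.le (Nat.cast_nonneg m)
      exact mul_nonneg (mul_nonneg (Nat.cast_nonneg _)
        (mul_nonneg (pow_nonneg hx0 _) (pow_nonneg (by linarith) _))) hq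
    rw [MeasureTheory.integral_eq_lintegral_of_nonneg_ae haenn
      (Continuous.aestronglyMeasurable (by fun_prop))]
    have hlin : (∫⁻ x in I, ENNReal.ofReal (∑ m ∈ Finset.Ioo ℓ M,
        (m.choose (ℓ+1) : ℝ) * (x ^ (ℓ+1-2) * (1-x) ^ (m - (ℓ+1))) * (φ m / m)) ∂Λ)
        ≤ 4 * B := by
      have hmono : ∀ᵐ x ∂(Λ.restrict I), ENNReal.ofReal (∑ m ∈ Finset.Ioo ℓ M,
          (m.choose (ℓ+1) : ℝ) * (x ^ (ℓ+1-2) * (1-x) ^ (m - (ℓ+1))) * (φ m / m))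
          ≤ 4 * h x := by
        filter_upwards [hae2] with x hx
        have hmaster := CollAux.master hφpos hφmono hT2 hd ℓ M hℓ hx.1 hx.2
        have hx1 : (1:ℝ) ≤ x⁻¹ := one_le_inv_iff₀.2 ⟨hx.1, hx.2.le⟩
        have hmax : max x⁻¹ 1 = x⁻¹ := max_eq_left hx1
        have hhx : 4 * h x = ENNReal.ofReal (4 * x⁻¹ ^ 2 * (φ x⁻¹ + φ T)) := by
          rw [hhdef]
          simp only [hφ'def, hmax]
          rw [← ENNReal.ofReal_add (hφpos x⁻¹ hx1).le (hφpos T (by linarith)).le]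
          rw [show (4:ℝ) * x⁻¹ ^ 2 * (φ x⁻¹ + φ T) = 4 * (x⁻¹ ^ 2 * (φ x⁻¹ + φ T)) by ring]
          rw [ENNReal.ofReal_mul (by norm_num), ENNReal.ofReal_mul (by positivity)]
          norm_num
        rw [hhx]
        exact ENNReal.ofReal_le_ofReal hmaster
      calc _ ≤ ∫⁻ x in I, 4 * h x ∂Λ := lintegral_mono_ae hmono
        _ = 4 * B := by rw [lintegral_const_mul' _ _ (by simp : (4:ℝ≥0∞) ≠ ⊤)]
    calc (∫⁻ x in I, ENNReal.ofReal (∑ m ∈ Finset.Ioo ℓ M,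
        (m.choose (ℓ+1) : ℝ) * (x ^ (ℓ+1-2) * (1-x) ^ (m - (ℓ+1))) * (φ m / m)) ∂Λ).toReal
        ≤ (4 * B).toReal := ENNReal.toReal_mono (ENNReal.mul_ne_top (by simp) hB) hlin
      _ = 4 * B.toReal := by rw [ENNReal.toReal_mul]; norm_num
  gcongr
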